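/- Let G be a D-regular Bonnet-Myers sharp graph of diameter L with pole x_0, and let x_1, x̄_1 ∈ S_1(x_0), x_2 ∈ S_2(x_0) with x_1 ~ x_2 ~ x̄_1 and x_1 not adjacent or equal to x̄_1. Let u ∈ S_1(x_0) with u ∉ {x_1, x̄_1}. Then u lies in the interval [x_0, x_2] if and only if u is adjacent to both x_1 and x̄_1. -/

import Mathlib

open Finset

namespace BMS

open scoped Classical

variable {V : Type*}

/-- The uniform probability measure on the closed 1-ball of `x` in a `D`-regular graph. -/
noncomputable def mu (G : SimpleGraph V) (D : ℕ) (x : V) : V → ℝ :=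
  fun v => if G.dist x v ≤ 1 then 1 / (D + 1) else 0

/-- The L¹-Wasserstein distance between `μ_x` and `μ_y`, as an infimum over transport plans. -/
noncomputable def W1 (G : SimpleGraph V) [Fintype V] (D : ℕ) (x y : V) : ℝ :=
  sInf { c : ℝ | ∃ π : V → V → ℝ,
    (∀ u v, 0 ≤ π u v) ∧
    (∀ u, ∑ v, π u v = mu G D x u) ∧
    (∀ v, ∑ u, π u v = mu G D y v) ∧
    c = ∑ u, ∑ v, (G.dist u v : ℝ) * π u v }

/-- Ollivier Ricci curvature (Lin–Lu–Yau normalization for regular graphs). -/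
noncomputable def kappa (G : SimpleGraph V) [Fintype V] (D : ℕ) (x y : V) : ℝ :=
  ((D + 1) / D) * (1 - W1 G D x y)

/-- `G` is Bonnet–Myers sharp: the infimum of the curvature over edges equals `2 / L`. -/
def BMSharp (G : SimpleGraph V) [Fintype V] (D L : ℕ) : Prop :=
  sInf { k : ℝ | ∃ x y, G.Adj x y ∧ k = kappa G D x y } = 2 / (L : ℝ)

/-- Number of neighbors of `y` at distance `k` from `x0`. -/
noncomputable def sphDeg (G : SimpleGraph V) [Fintype V] (x0 y : V) (k : ℕ) : ℕ :=
  (Finset.univ.filter (fun v => G.Adj y v ∧ G.dist x0 v = k)).card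

/-- Number of triangles containing the edge `x ~ y` (common neighbors of `x` and `y`). -/
noncomputable def tri (G : SimpleGraph V) [Fintype V] (x y : V) : ℕ :=
  (Finset.univ.filter (fun v => G.Adj x v ∧ G.Adj y v)).card

/-- A good optimal transport map from `B_1(a)` to `B_1(b)`: a bijection between the 1-balls,
fixing exactly the vertices of `B_1(a) ∩ B_1(b)` (among the domain), whose cost realizes
the Wasserstein distance `W1 (μ_a, μ_b)`. -/
def goodMap (G : SimpleGraph V) [Fintype V] (D : ℕ) (a b : V) (T : V → V) : Prop :=
  Set.BijOn T {v | G.dist a v ≤ 1} {v | G.dist b v ≤ 1} ∧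
  (∀ v, G.dist a v ≤ 1 → (T v = v ↔ G.dist b v ≤ 1)) ∧
  (1 / (D + 1 : ℝ)) *
      ∑ v ∈ Finset.univ.filter (fun v => G.dist a v ≤ 1), (G.dist v (T v) : ℝ) =
    W1 G D a b

section Aux

variable [Fintype V] (G : SimpleGraph V)

/-- the closed 1-ball as a finset -/
noncomputable def bll (a : V) : Finset V := univ.filter (fun v => G.dist a v ≤ 1)

/-- sum of g over the closed 1-ball -/
noncomputable def sB (g : V → ℝ) (a : V) : ℝ := ∑ v ∈ bll G a, g v

variable {G}

lemma mem_bll {a v : V} : v ∈ bll G a ↔ G.dist a v ≤ 1 := by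
  simp [bll]

lemma bll_eq (hconn : G.Connected) (a : V) :
    bll G a = insert a (G.neighborFinset a) := by
  ext v
  simp only [mem_bll, mem_insert, SimpleGraph.mem_neighborFinset]
  constructor
  · intro h
    have h0 : G.dist a v = 0 ∨ G.dist a v = 1 := by omega
    rcases h0 with h' | h'
    · exact Or.inl ((hconn.dist_eq_zero_iff).mp h').symm
    · exact Or.inr (SimpleGraph.dist_eq_one_iff_adj.mp h')
  · rintro (rfl | h)
    · simp [SimpleGraph.dist_self]
    · exact le_of_eq (SimpleGraph.dist_eq_one_iff_adj.mpr h)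

lemma card_bll (hconn : G.Connected) {D : ℕ} (hreg : G.IsRegularOfDegree D) (a : V) :
    (bll G a).card = D + 1 := by
  rw [bll_eq hconn, card_insert_of_notMem (by simp), G.card_neighborFinset_eq_degree, hreg a]

lemma sB_eq (hconn : G.Connected) (g : V → ℝ) (a : V) :
    sB G g a = g a + ∑ v ∈ G.neighborFinset a, g v := by
  rw [sB, bll_eq hconn, sum_insert (by simp)]

lemma sum_mul_mu (D : ℕ) (g : V → ℝ) (b : V) :
    ∑ v, g v * mu G D b v = sB G g b * (1 / (D + 1 : ℝ)) := by
  rw [sB, sum_mul, bll]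
  rw [Finset.sum_filter]
  apply Finset.sum_congr rfl
  intro v _
  by_cases h : G.dist b v ≤ 1 <;> simp [mu, h]

lemma sum_mu (hconn : G.Connected) {D : ℕ} (hreg : G.IsRegularOfDegree D) (a : V) :
    ∑ v, mu G D a v = 1 := by
  have h := sum_mul_mu (G := G) D (fun _ => (1:ℝ)) a
  simp only [one_mul] at h
  rw [h, sB]
  simp only [Finset.sum_const, nsmul_eq_mul, mul_one]
  rw [card_bll hconn hreg]
  have hne : ((D:ℝ) + 1) ≠ 0 := by positivity
  push_cast
  field_simp

/-- curvature lower bound from Bonnet–Myers sharpness -/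
lemma kappa_ge {D L : ℕ} (hL : 0 < L) (hBM : BMSharp G D L)
    {a b : V} (hab : G.Adj a b) : 2 / (L : ℝ) ≤ kappa G D a b := by
  set S := { k : ℝ | ∃ x y, G.Adj x y ∧ k = kappa G D x y } with hS
  have hmem : kappa G D a b ∈ S := ⟨a, b, hab, rfl⟩
  have hbdd : BddBelow S := by
    by_contra hnb
    have := Real.sInf_of_not_bddBelow hnb
    rw [BMSharp] at hBM
    rw [← hS] at hBM
    rw [this] at hBM
    have hL' : (0:ℝ) < (L:ℝ) := by exact_mod_cast hL
    have : (2:ℝ) / (L:ℝ) > 0 := by positivity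
    rw [← hBM] at this
    exact lt_irrefl _ this
  have := csInf_le hbdd hmem
  rw [BMSharp] at hBM
  rw [← hS] at hBM
  rw [hBM] at this
  exact this

/-- upper bound on W1 over an edge -/
lemma W1_le {D L : ℕ} (hD : 0 < D) (hL : 0 < L) (hBM : BMSharp G D L)
    {a b : V} (hab : G.Adj a b) :
    W1 G D a b ≤ 1 - 2 * D / ((D + 1) * (L : ℝ)) := by
  have h := kappa_ge hL hBM hab
  rw [kappa] at h
  have hD' : (0:ℝ) < (D:ℝ) := by exact_mod_cast hD
  have hL' : (0:ℝ) < (L:ℝ) := by exact_mod_cast hL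
  have hD1 : (0:ℝ) < (D:ℝ) + 1 := by linarith
  -- h : 2 / L ≤ ((D+1)/D) * (1 - W1)
  have h2 : (2 / (L:ℝ)) * (D / (D+1)) ≤ 1 - W1 G D a b := by
    have := mul_le_mul_of_nonneg_right h (le_of_lt (div_pos hD' hD1))
    calc (2 / (L:ℝ)) * (D / (D+1)) ≤ ((D + 1) / D) * (1 - W1 G D a b) * (D / (D+1)) := this
    _ = 1 - W1 G D a b := by field_simp
  have : W1 G D a b ≤ 1 - (2 / (L:ℝ)) * (D / (D+1)) := by linarith
  calc W1 G D a b ≤ 1 - (2 / (L:ℝ)) * (D / (D+1)) := this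
  _ = 1 - 2 * D / ((D + 1) * (L:ℝ)) := by field_simp

/-- weak Kantorovich duality -/
lemma dual_le_W1 (hconn : G.Connected) {D : ℕ} (hreg : G.IsRegularOfDegree D)
    (g : V → ℝ) (hg : ∀ u v : V, g v - g u ≤ G.dist u v) (a b : V) :
    sB G g b * (1 / (D + 1 : ℝ)) - sB G g a * (1 / (D + 1 : ℝ)) ≤ W1 G D a b := by
  apply le_csInf
  · -- nonempty: product plan
    refine ⟨∑ u, ∑ v, (G.dist u v : ℝ) * (mu G D a u * mu G D b v), ?_⟩
    refine ⟨fun u v => mu G D a u * mu G D b v, ?_, ?_, ?_, rfl⟩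
    · intro u v
      have h1 : 0 ≤ mu G D a u := by rw [mu]; positivity
      have h2 : 0 ≤ mu G D b v := by rw [mu]; positivity
      positivity
    · intro u
      rw [← Finset.mul_sum, sum_mu hconn hreg, mul_one]
    · intro v
      have : ∀ w : V, mu G D a w * mu G D b v = mu G D b v * mu G D a w := by
        intro w; ring
      simp_rw [this]
      rw [← Finset.mul_sum, sum_mu hconn hreg, mul_one]
  · rintro c ⟨π, hpos, hrow, hcol, rfl⟩
    have key : ∀ u v : V, (g v - g u) * π u v ≤ (G.dist u v : ℝ) * π u v := by
      intro u v
      exact mul_le_mul_of_nonneg_right (hg u v) (hpos u v)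
    calc sB G g b * (1 / (D + 1 : ℝ)) - sB G g a * (1 / (D + 1 : ℝ))
        = ∑ v, g v * mu G D b v - ∑ u, g u * mu G D a u := by
          rw [sum_mul_mu, sum_mul_mu]
      _ = ∑ v, g v * (∑ u, π u v) - ∑ u, g u * (∑ v, π u v) := by
          simp_rw [hrow, hcol]
      _ = ∑ u, ∑ v, (g v - g u) * π u v := by
          have e1 : ∑ v, g v * (∑ u, π u v) = ∑ u, ∑ v, g v * π u v := by
            simp_rw [Finset.mul_sum]
            rw [Finset.sum_comm]
          have e2 : ∑ u, g u * (∑ v, π u v) = ∑ u, ∑ v, g u * π u v := by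
            simp_rw [Finset.mul_sum]
          rw [e1, e2, ← Finset.sum_sub_distrib]
          apply Finset.sum_congr rfl
          intro u _
          rw [← Finset.sum_sub_distrib]
          apply Finset.sum_congr rfl
          intro v _
          ring
      _ ≤ ∑ u, ∑ v, (G.dist u v : ℝ) * π u v := by
          apply Finset.sum_le_sum
          intro u _
          apply Finset.sum_le_sum
          intro v _
          exact key u v

/-- the master inequality: over any edge, for any 1-Lipschitz g -/
lemma master (hconn : G.Connected) {D L : ℕ} (hD : 0 < D) (hL : 0 < L)
    (hreg : G.IsRegularOfDegree D) (hBM : BMSharp G D L)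
    (g : V → ℝ) (hg : ∀ u v : V, g v - g u ≤ G.dist u v)
    {a b : V} (hab : G.Adj a b) :
    sB G g b - sB G g a ≤ (D + 1) - 2 * D / (L : ℝ) := by
  have h1 := dual_le_W1 hconn hreg g hg a b
  have h2 := W1_le hD hL hBM hab
  have hD1 : (0:ℝ) < (D:ℝ) + 1 := by positivity
  have hL' : (0:ℝ) < (L:ℝ) := by exact_mod_cast hL
  have h3 : sB G g b * (1 / (D + 1 : ℝ)) - sB G g a * (1 / (D + 1 : ℝ))
      ≤ 1 - 2 * D / ((D + 1) * (L : ℝ)) := le_trans h1 h2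
  have := mul_le_mul_of_nonneg_right h3 (le_of_lt hD1)
  calc sB G g b - sB G g a
      = (sB G g b * (1 / (D + 1 : ℝ)) - sB G g a * (1 / (D + 1 : ℝ))) * ((D:ℝ)+1) := by
        field_simp
    _ ≤ (1 - 2 * D / ((D + 1) * (L : ℝ))) * ((D:ℝ)+1) := this
    _ = (D + 1) - 2 * D / (L : ℝ) := by field_simp

omit [Fintype V] in
/-- edge-Lipschitz implies dist-Lipschitz -/
lemma lip_of_adj (hconn : G.Connected) (g : V → ℝ)
    (hadj : ∀ a b : V, G.Adj a b → g b - g a ≤ 1) :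
    ∀ u v : V, g v - g u ≤ G.dist u v := by
  have key : ∀ (u v : V) (w : G.Walk u v), g v - g u ≤ w.length := by
    intro u v w
    induction w with
    | nil => simp
    | @cons x y z h p ih =>
      have h1 := hadj x y h
      simp only [SimpleGraph.Walk.length_cons]
      push_cast
      linarith
  intro u v
  obtain ⟨w, hw⟩ := hconn.exists_walk_length_eq_dist u v
  have := key u v w
  rw [hw] at this
  exact this

end Aux

section Telescope

variable [Fintype V] {G : SimpleGraph V} {D L : ℕ} {x0 p : V}

/-- the tight bound value -/
noncomputable def wq (D L : ℕ) : ℝ := ((D:ℝ) + 1) - 2 * D / (L : ℝ)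

/-- distance-to-x0 potential -/
noncomputable def fX (G : SimpleGraph V) (x0 : V) : V → ℝ := fun v => (G.dist x0 v : ℝ)

omit [Fintype V] in
lemma lip_fX (hconn : G.Connected) (x0 : V) :
    ∀ u v : V, fX G x0 v - fX G x0 u ≤ G.dist u v := by
  intro u v
  have := hconn.dist_triangle (u := x0) (v := u) (w := v)
  have h : (G.dist x0 v : ℝ) ≤ (G.dist x0 u : ℝ) + (G.dist u v : ℝ) := by exact_mod_cast this
  simp only [fX]
  linarith

omit [Fintype V] in
lemma lip_negdist (hconn : G.Connected) (p : V) :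
    ∀ u v : V, (fun w => -(G.dist p w : ℝ)) v - (fun w => -(G.dist p w : ℝ)) u ≤ G.dist u v := by
  intro u v
  simp only
  have := hconn.dist_triangle (u := p) (v := v) (w := u)
  have h : (G.dist p u : ℝ) ≤ (G.dist p v : ℝ) + (G.dist v u : ℝ) := by exact_mod_cast this
  have hc : G.dist v u = G.dist u v := SimpleGraph.dist_comm
  rw [hc] at h
  linarith

lemma sum_steps (g : V → ℝ) (w : G.Walk x0 p) :
    ∑ i ∈ range w.length, (sB G g (w.getVert (i+1)) - sB G g (w.getVert i))
      = sB G g p - sB G g x0 := by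
  rw [Finset.sum_range_sub (f := fun i => sB G g (w.getVert i))]
  rw [SimpleGraph.Walk.getVert_length, SimpleGraph.Walk.getVert_zero]

lemma telescope_le (hconn : G.Connected) (hD : 0 < D) (hL : 0 < L)
    (hreg : G.IsRegularOfDegree D) (hBM : BMSharp G D L)
    (g : V → ℝ) (hg : ∀ u v : V, g v - g u ≤ G.dist u v) (w : G.Walk x0 p) :
    sB G g p - sB G g x0 ≤ (w.length : ℝ) * wq D L := by
  rw [← sum_steps]
  calc ∑ i ∈ range w.length, (sB G g (w.getVert (i+1)) - sB G g (w.getVert i))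
      ≤ ∑ _i ∈ range w.length, wq D L := by
        apply Finset.sum_le_sum
        intro i hi
        rw [mem_range] at hi
        exact master hconn hD hL hreg hBM g hg (w.adj_getVert_succ hi)
    _ = (w.length : ℝ) * wq D L := by
        rw [Finset.sum_const, card_range, nsmul_eq_mul]

lemma steps_eq (hconn : G.Connected) (hD : 0 < D) (hL : 0 < L)
    (hreg : G.IsRegularOfDegree D) (hBM : BMSharp G D L)
    (g : V → ℝ) (hg : ∀ u v : V, g v - g u ≤ G.dist u v) (w : G.Walk x0 p)
    (hlen : w.length = L)
    (htot : sB G g p - sB G g x0 = (L : ℝ) * wq D L) :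
    ∀ i, i < L → sB G g (w.getVert (i+1)) - sB G g (w.getVert i) = wq D L := by
  have hsum : ∑ i ∈ range L, (sB G g (w.getVert (i+1)) - sB G g (w.getVert i))
      = (L:ℝ) * wq D L := by
    rw [← hlen] at htot ⊢
    rw [sum_steps, htot, hlen]
  have hle : ∀ i ∈ range L, sB G g (w.getVert (i+1)) - sB G g (w.getVert i) ≤ wq D L := by
    intro i hi
    rw [mem_range] at hi
    apply master hconn hD hL hreg hBM g hg
    apply w.adj_getVert_succ
    omega
  have hzero : ∑ i ∈ range L, (wq D L - (sB G g (w.getVert (i+1)) - sB G g (w.getVert i))) = 0 := by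
    rw [Finset.sum_sub_distrib, hsum, Finset.sum_const, card_range, nsmul_eq_mul]
    ring
  have := (Finset.sum_eq_zero_iff_of_nonneg (fun i hi => by
      have := hle i hi; linarith)).mp hzero
  intro i hi
  have h := this i (mem_range.mpr hi)
  linarith

omit [Fintype V] in
/-- forcing equality from a sum bound -/
lemma forced_eq {α : Type*} {s : Finset α} {F : α → ℕ} {m : ℕ}
    (hlow : ∀ v ∈ s, m ≤ F v) (hsum : ∑ v ∈ s, (F v : ℝ) ≤ (s.card : ℝ) * m) :
    ∀ v ∈ s, F v = m := by
  have hnat : ∑ v ∈ s, F v ≤ s.card * m := by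
    exact_mod_cast hsum
  by_contra hc
  push_neg at hc
  obtain ⟨v0, hv0, hne⟩ := hc
  have hlt : ∑ _v ∈ s, m < ∑ v ∈ s, F v := by
    apply Finset.sum_lt_sum hlow
    exact ⟨v0, hv0, lt_of_le_of_ne (hlow v0 hv0) (Ne.symm hne)⟩
  rw [Finset.sum_const, smul_eq_mul] at hlt
  omega

end Telescope

section Spheres

variable [Fintype V] {G : SimpleGraph V} {D L : ℕ} {x0 p : V}

omit [Fintype V] in
lemma Lwq (hL : 0 < L) : (L : ℝ) * wq D L = (L:ℝ) * ((D:ℝ)+1) - 2*(D:ℝ) := by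
  have hL' : (L:ℝ) ≠ 0 := by positivity
  rw [wq]
  field_simp

lemma sB_fX_x0 (hconn : G.Connected) (hreg : G.IsRegularOfDegree D) :
    sB G (fX G x0) x0 = (D : ℝ) := by
  rw [sB_eq hconn]
  have h0 : fX G x0 x0 = 0 := by simp [fX, SimpleGraph.dist_self]
  rw [h0, zero_add]
  have : ∀ v ∈ G.neighborFinset x0, fX G x0 v = 1 := by
    intro v hv
    rw [SimpleGraph.mem_neighborFinset] at hv
    simp [fX, SimpleGraph.dist_eq_one_iff_adj.mpr hv]
  rw [Finset.sum_congr rfl this, Finset.sum_const, nsmul_eq_mul,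
    G.card_neighborFinset_eq_degree, hreg x0, mul_one]

/-- all neighbors of the antipode are at distance L-1 -/
lemma nbrs_p_far (hconn : G.Connected) (hD : 0 < D) (hL : 0 < L)
    (hreg : G.IsRegularOfDegree D) (hBM : BMSharp G D L) (hp : G.dist x0 p = L) :
    ∀ v ∈ G.neighborFinset p, G.dist x0 v + 1 = L := by
  obtain ⟨w, hw⟩ := hconn.exists_walk_length_eq_dist x0 p
  have htel := telescope_le hconn hD hL hreg hBM (fX G x0) (lip_fX hconn x0) w
  rw [hw, hp] at htel
  have hx0 : sB G (fX G x0) x0 = (D:ℝ) := sB_fX_x0 hconn hreg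
  have hpball : sB G (fX G x0) p
      = (L:ℝ) + ∑ v ∈ G.neighborFinset p, (G.dist x0 v : ℝ) := by
    rw [sB_eq hconn]
    have : fX G x0 p = (L:ℝ) := by simp [fX, hp]
    rw [this]
    rfl
  rw [hx0, hpball, Lwq hL] at htel
  have hcard : (G.neighborFinset p).card = D := by
    rw [G.card_neighborFinset_eq_degree, hreg p]
  have hsum : ∑ v ∈ G.neighborFinset p, (G.dist x0 v : ℝ)
      ≤ ((G.neighborFinset p).card : ℝ) * ((L - 1 : ℕ) : ℝ) := by
    rw [hcard]
    have hc : ((L - 1 : ℕ) : ℝ) = (L:ℝ) - 1 := by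
      push_cast [Nat.cast_sub hL]
      ring
    rw [hc]
    have hD' : (0:ℝ) ≤ (D:ℝ) := by positivity
    nlinarith [htel]
  have hlow : ∀ v ∈ G.neighborFinset p, L - 1 ≤ G.dist x0 v := by
    intro v hv
    rw [SimpleGraph.mem_neighborFinset] at hv
    have h1 : G.dist v p = 1 := SimpleGraph.dist_eq_one_iff_adj.mpr hv.symm
    have h2 : G.dist x0 p ≤ G.dist x0 v + G.dist v p := hconn.dist_triangle
    omega
  have := forced_eq hlow hsum
  intro v hv
  have h := this v hv
  omega

lemma sB_f2_p (hconn : G.Connected) (hreg : G.IsRegularOfDegree D) :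
    sB G (fun w => -(G.dist p w : ℝ)) p = -(D:ℝ) := by
  rw [sB_eq hconn]
  simp only [SimpleGraph.dist_self, Nat.cast_zero, neg_zero, zero_add]
  have : ∀ v ∈ G.neighborFinset p, -(G.dist p v : ℝ) = -1 := by
    intro v hv
    rw [SimpleGraph.mem_neighborFinset] at hv
    simp [SimpleGraph.dist_eq_one_iff_adj.mpr hv]
  rw [Finset.sum_congr rfl this, Finset.sum_const, nsmul_eq_mul,
    G.card_neighborFinset_eq_degree, hreg p]
  ring

/-- all neighbors of x0 are at distance L-1 from p -/
lemma S1_pdist (hconn : G.Connected) (hD : 0 < D) (hL : 0 < L)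
    (hreg : G.IsRegularOfDegree D) (hBM : BMSharp G D L) (hp : G.dist x0 p = L) :
    ∀ v ∈ G.neighborFinset x0, G.dist p v + 1 = L := by
  obtain ⟨w, hw⟩ := hconn.exists_walk_length_eq_dist x0 p
  have htel := telescope_le hconn hD hL hreg hBM (fun w => -(G.dist p w : ℝ))
    (lip_negdist hconn p) w
  rw [hw, hp] at htel
  have hpp : sB G (fun w => -(G.dist p w : ℝ)) p = -(D:ℝ) := sB_f2_p hconn hreg
  have hx0 : sB G (fun w => -(G.dist p w : ℝ)) x0
      = -(L:ℝ) - ∑ v ∈ G.neighborFinset x0, (G.dist p v : ℝ) := by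
    rw [sB_eq hconn]
    have h1 : G.dist p x0 = L := by rw [SimpleGraph.dist_comm]; exact hp
    simp only [h1]
    rw [Finset.sum_neg_distrib]
    ring
  rw [hpp, hx0, Lwq hL] at htel
  have hcard : (G.neighborFinset x0).card = D := by
    rw [G.card_neighborFinset_eq_degree, hreg x0]
  have hsum : ∑ v ∈ G.neighborFinset x0, (G.dist p v : ℝ)
      ≤ ((G.neighborFinset x0).card : ℝ) * ((L - 1 : ℕ) : ℝ) := by
    rw [hcard]
    have hc : ((L - 1 : ℕ) : ℝ) = (L:ℝ) - 1 := by
      push_cast [Nat.cast_sub hL]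
      ring
    rw [hc]
    nlinarith [htel]
  have hlow : ∀ v ∈ G.neighborFinset x0, L - 1 ≤ G.dist p v := by
    intro v hv
    rw [SimpleGraph.mem_neighborFinset] at hv
    have h1 : G.dist x0 v = 1 := SimpleGraph.dist_eq_one_iff_adj.mpr hv
    have h2 : G.dist x0 p ≤ G.dist x0 v + G.dist v p := hconn.dist_triangle
    have h3 : G.dist v p = G.dist p v := SimpleGraph.dist_comm
    omega
  have := forced_eq hlow hsum
  intro v hv
  have h := this v hv
  omega

/-- exact total for f1 -/
lemma tot1 (hconn : G.Connected) (hD : 0 < D) (hL : 0 < L)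
    (hreg : G.IsRegularOfDegree D) (hBM : BMSharp G D L) (hp : G.dist x0 p = L) :
    sB G (fX G x0) p - sB G (fX G x0) x0 = (L:ℝ) * wq D L := by
  have hfar := nbrs_p_far hconn hD hL hreg hBM hp
  have hx0 : sB G (fX G x0) x0 = (D:ℝ) := sB_fX_x0 hconn hreg
  have hcard : (G.neighborFinset p).card = D := by
    rw [G.card_neighborFinset_eq_degree, hreg p]
  have hpball : sB G (fX G x0) p = (L:ℝ) + (D:ℝ) * ((L:ℝ) - 1) := by
    rw [sB_eq hconn]
    have h0 : fX G x0 p = (L:ℝ) := by simp [fX, hp]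
    rw [h0]
    have : ∀ v ∈ G.neighborFinset p, fX G x0 v = (L:ℝ) - 1 := by
      intro v hv
      have := hfar v hv
      simp only [fX]
      have : (G.dist x0 v : ℝ) = (L:ℝ) - 1 := by
        have hc : ((G.dist x0 v : ℕ) : ℝ) + 1 = (L:ℝ) := by exact_mod_cast this
        linarith
      exact this
    rw [Finset.sum_congr rfl this, Finset.sum_const, nsmul_eq_mul, hcard]
  rw [hx0, hpball, Lwq hL]
  ring

/-- exact total for f2 -/
lemma tot2 (hconn : G.Connected) (hD : 0 < D) (hL : 0 < L)
    (hreg : G.IsRegularOfDegree D) (hBM : BMSharp G D L) (hp : G.dist x0 p = L) :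
    sB G (fun w => -(G.dist p w : ℝ)) p - sB G (fun w => -(G.dist p w : ℝ)) x0
      = (L:ℝ) * wq D L := by
  have hfar := S1_pdist hconn hD hL hreg hBM hp
  have hpp : sB G (fun w => -(G.dist p w : ℝ)) p = -(D:ℝ) := sB_f2_p hconn hreg
  have hcard : (G.neighborFinset x0).card = D := by
    rw [G.card_neighborFinset_eq_degree, hreg x0]
  have hx0 : sB G (fun w => -(G.dist p w : ℝ)) x0 = -(L:ℝ) - (D:ℝ) * ((L:ℝ) - 1) := by
    rw [sB_eq hconn]
    have h1 : G.dist p x0 = L := by rw [SimpleGraph.dist_comm]; exact hp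
    simp only [h1]
    have : ∀ v ∈ G.neighborFinset x0, -(G.dist p v : ℝ) = -((L:ℝ) - 1) := by
      intro v hv
      have := hfar v hv
      have hc : ((G.dist p v : ℕ) : ℝ) + 1 = (L:ℝ) := by exact_mod_cast this
      have : (G.dist p v : ℝ) = (L:ℝ) - 1 := by linarith
      rw [this]
    rw [Finset.sum_congr rfl this, Finset.sum_const, nsmul_eq_mul, hcard]
    push_cast
    ring
  rw [hpp, hx0, Lwq hL]
  ring

/-- tightness of the first edge (x0, s) for s in the 1-sphere -/
lemma tight01 (hconn : G.Connected) (hD : 0 < D) (hL : 0 < L)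
    (hreg : G.IsRegularOfDegree D) (hBM : BMSharp G D L) (hp : G.dist x0 p = L)
    {s : V} (hs : G.dist x0 s = 1)
    (g : V → ℝ) (hg : ∀ u v : V, g v - g u ≤ G.dist u v)
    (htot : sB G g p - sB G g x0 = (L:ℝ) * wq D L) :
    sB G g s - sB G g x0 = wq D L := by
  have hadj : G.Adj x0 s := SimpleGraph.dist_eq_one_iff_adj.mp hs
  have hsp : G.dist p s + 1 = L :=
    S1_pdist hconn hD hL hreg hBM hp s ((SimpleGraph.mem_neighborFinset G x0 s).mpr hadj)
  have hsp' : G.dist s p + 1 = L := by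
    have : G.dist s p = G.dist p s := SimpleGraph.dist_comm
    omega
  obtain ⟨γ, hγ⟩ := hconn.exists_walk_length_eq_dist s p
  set w : G.Walk x0 p := SimpleGraph.Walk.cons hadj γ with hw
  have hlen : w.length = L := by
    rw [hw, SimpleGraph.Walk.length_cons, hγ]
    omega
  have h := steps_eq hconn hD hL hreg hBM g hg w hlen htot 0 hL
  have h0 : w.getVert 0 = x0 := SimpleGraph.Walk.getVert_zero w
  have h1 : w.getVert 1 = s := by
    rw [hw]
    rw [SimpleGraph.Walk.getVert_cons_succ]
    exact SimpleGraph.Walk.getVert_zero γ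
  rw [h0, h1] at h
  exact h

end Spheres

section Structure2

variable [Fintype V] {G : SimpleGraph V} {D L : ℕ} {x0 p : V}

omit [Fintype V] in
lemma split3 {α : Type*} {s : Finset α} {f : α → ℕ} (hf : ∀ v ∈ s, f v ≤ 2) (F : α → ℝ) :
    ∑ v ∈ s, F v =
      (∑ v ∈ s.filter (fun v => f v = 0), F v) + (∑ v ∈ s.filter (fun v => f v = 1), F v)
        + (∑ v ∈ s.filter (fun v => f v = 2), F v) := by
  classical
  have h01 : s.filter (fun v => f v ≤ 1)
      = s.filter (fun v => f v = 0) ∪ s.filter (fun v => f v = 1) := by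
    ext v
    simp only [Finset.mem_filter, Finset.mem_union]
    constructor
    · rintro ⟨hv, h⟩
      rcases Nat.le_one_iff_eq_zero_or_eq_one.mp h with h' | h'
      · exact Or.inl ⟨hv, h'⟩
      · exact Or.inr ⟨hv, h'⟩
    · rintro (⟨hv, h⟩ | ⟨hv, h⟩) <;> exact ⟨hv, by omega⟩
  have hs : s = s.filter (fun v => f v ≤ 1) ∪ s.filter (fun v => f v = 2) := by
    ext v
    simp only [Finset.mem_filter, Finset.mem_union]
    constructor
    · intro hv
      have := hf v hv
      by_cases h : f v ≤ 1
      · exact Or.inl ⟨hv, h⟩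
      · exact Or.inr ⟨hv, by omega⟩
    · rintro (⟨hv, _⟩ | ⟨hv, _⟩) <;> exact hv
  have hd1 : Disjoint (s.filter (fun v => f v = 0)) (s.filter (fun v => f v = 1)) := by
    rw [Finset.disjoint_left]
    intro a ha hb
    simp only [Finset.mem_filter] at ha hb
    omega
  have hd2 : Disjoint (s.filter (fun v => f v ≤ 1)) (s.filter (fun v => f v = 2)) := by
    rw [Finset.disjoint_left]
    intro a ha hb
    simp only [Finset.mem_filter] at ha hb
    omega
  conv_lhs => rw [hs]
  rw [Finset.sum_union hd2, h01, Finset.sum_union hd1]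

omit [Fintype V] in
lemma split3_card {α : Type*} {s : Finset α} {f : α → ℕ} (hf : ∀ v ∈ s, f v ≤ 2) :
    s.card = (s.filter (fun v => f v = 0)).card + (s.filter (fun v => f v = 1)).card
      + (s.filter (fun v => f v = 2)).card := by
  have h := split3 hf (fun _ => (1:ℝ))
  simp only [Finset.sum_const, nsmul_eq_mul, mul_one] at h
  exact_mod_cast h

/-- neighbors of s at level k -/
noncomputable def nk (G : SimpleGraph V) (x0 s : V) (k : ℕ) : Finset V :=
  (G.neighborFinset s).filter (fun v => G.dist x0 v = k)

lemma mem_nk {s v : V} {k : ℕ} : v ∈ nk G x0 s k ↔ G.Adj s v ∧ G.dist x0 v = k := by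
  simp [nk]

lemma nbr_dist_le2 (hconn : G.Connected) {s : V} (hs : G.dist x0 s = 1) :
    ∀ v ∈ G.neighborFinset s, G.dist x0 v ≤ 2 := by
  intro v hv
  rw [SimpleGraph.mem_neighborFinset] at hv
  have h1 : G.dist s v = 1 := SimpleGraph.dist_eq_one_iff_adj.mpr hv
  have h2 : G.dist x0 v ≤ G.dist x0 s + G.dist s v := hconn.dist_triangle
  omega

lemma nk0_eq (hconn : G.Connected) {s : V} (hs : G.dist x0 s = 1) :
    nk G x0 s 0 = {x0} := by
  ext v
  rw [mem_nk, Finset.mem_singleton]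
  constructor
  · rintro ⟨_, hd⟩
    exact ((hconn.dist_eq_zero_iff).mp hd).symm
  · rintro rfl
    exact ⟨(SimpleGraph.dist_eq_one_iff_adj.mp hs).symm, SimpleGraph.dist_self⟩

lemma nk_card_split (hconn : G.Connected) (hreg : G.IsRegularOfDegree D)
    {s : V} (hs : G.dist x0 s = 1) :
    1 + (nk G x0 s 1).card + (nk G x0 s 2).card = D := by
  have h := split3_card (f := fun v => G.dist x0 v) (nbr_dist_le2 hconn hs)
  have h0 : ((G.neighborFinset s).filter (fun v => G.dist x0 v = 0)).card = 1 := by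
    have : (G.neighborFinset s).filter (fun v => G.dist x0 v = 0) = nk G x0 s 0 := rfl
    rw [this, nk0_eq hconn hs, Finset.card_singleton]
  rw [G.card_neighborFinset_eq_degree, hreg s] at h
  have h1 : (G.neighborFinset s).filter (fun v => G.dist x0 v = 1) = nk G x0 s 1 := rfl
  have h2 : (G.neighborFinset s).filter (fun v => G.dist x0 v = 2) = nk G x0 s 2 := rfl
  rw [h0, h1, h2] at h
  omega

/-- key degree identity on the 1-sphere: the outdegree equals wq -/
lemma dplus_eq (hconn : G.Connected) (hD : 0 < D) (hL : 0 < L)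
    (hreg : G.IsRegularOfDegree D) (hBM : BMSharp G D L) (hp : G.dist x0 p = L)
    {s : V} (hs : G.dist x0 s = 1) :
    ((nk G x0 s 2).card : ℝ) = wq D L := by
  have ht := tight01 hconn hD hL hreg hBM hp hs (fX G x0) (lip_fX hconn x0)
    (tot1 hconn hD hL hreg hBM hp)
  have hx0 : sB G (fX G x0) x0 = (D:ℝ) := sB_fX_x0 hconn hreg
  have hsB : sB G (fX G x0) s
      = 1 + (((nk G x0 s 1).card : ℝ) + 2 * ((nk G x0 s 2).card : ℝ)) := by
    rw [sB_eq hconn]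
    have h1 : fX G x0 s = 1 := by simp [fX, hs]
    rw [h1, split3 (f := fun v => G.dist x0 v) (nbr_dist_le2 hconn hs) (fX G x0)]
    have e0 : ∑ v ∈ (G.neighborFinset s).filter (fun v => G.dist x0 v = 0), fX G x0 v = 0 := by
      apply Finset.sum_eq_zero
      intro v hv
      rw [Finset.mem_filter] at hv
      simp [fX, hv.2]
    have e1 : ∑ v ∈ (G.neighborFinset s).filter (fun v => G.dist x0 v = 1), fX G x0 v
        = ((nk G x0 s 1).card : ℝ) := by
      have : ∀ v ∈ (G.neighborFinset s).filter (fun v => G.dist x0 v = 1), fX G x0 v = 1 := by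
        intro v hv
        rw [Finset.mem_filter] at hv
        simp [fX, hv.2]
      rw [Finset.sum_congr rfl this, Finset.sum_const, nsmul_eq_mul, mul_one]
      rfl
    have e2 : ∑ v ∈ (G.neighborFinset s).filter (fun v => G.dist x0 v = 2), fX G x0 v
        = 2 * ((nk G x0 s 2).card : ℝ) := by
      have : ∀ v ∈ (G.neighborFinset s).filter (fun v => G.dist x0 v = 2), fX G x0 v = 2 := by
        intro v hv
        rw [Finset.mem_filter] at hv
        simp [fX, hv.2]
      rw [Finset.sum_congr rfl this, Finset.sum_const, nsmul_eq_mul]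
      rw [mul_comm]
      rfl
    rw [e0, e1, e2]
    ring
  rw [hx0, hsB] at ht
  have hcards := nk_card_split hconn hreg hs
  have hcards' : ((nk G x0 s 1).card : ℝ) + ((nk G x0 s 2).card : ℝ) + 1 = (D : ℝ) := by
    have h' : (1 + (nk G x0 s 1).card + (nk G x0 s 2).card : ℕ) = D := hcards
    push_cast [← h']
    ring
  linarith

end Structure2

section Structure3

variable [Fintype V] {G : SimpleGraph V} {D L : ℕ} {x0 p : V}

lemma sB_f2_x0 (hconn : G.Connected) (hD : 0 < D) (hL : 0 < L)
    (hreg : G.IsRegularOfDegree D) (hBM : BMSharp G D L) (hp : G.dist x0 p = L) :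
    sB G (fun w => -(G.dist p w : ℝ)) x0 = -(L:ℝ) - (D:ℝ) * ((L:ℝ) - 1) := by
  have hfar := S1_pdist hconn hD hL hreg hBM hp
  have hcard : (G.neighborFinset x0).card = D := by
    rw [G.card_neighborFinset_eq_degree, hreg x0]
  rw [sB_eq hconn]
  have h1 : G.dist p x0 = L := by rw [SimpleGraph.dist_comm]; exact hp
  simp only [h1]
  have : ∀ v ∈ G.neighborFinset x0, -(G.dist p v : ℝ) = -((L:ℝ) - 1) := by
    intro v hv
    have := hfar v hv
    have hc : ((G.dist p v : ℕ) : ℝ) + 1 = (L:ℝ) := by exact_mod_cast this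
    have h2 : (G.dist p v : ℝ) = (L:ℝ) - 1 := by linarith
    rw [h2]
  rw [Finset.sum_congr rfl this, Finset.sum_const, nsmul_eq_mul, hcard]
  ring

/-- every level-2 neighbor of a level-1 vertex is at distance L-2 from p -/
lemma child_pdist (hconn : G.Connected) (hD : 0 < D) (hL2 : 2 ≤ L)
    (hreg : G.IsRegularOfDegree D) (hBM : BMSharp G D L) (hp : G.dist x0 p = L)
    {s : V} (hs : G.dist x0 s = 1) :
    ∀ v ∈ nk G x0 s 2, G.dist p v + 2 = L := by
  have hL : 0 < L := by omega
  have ht := tight01 hconn hD hL hreg hBM hp hs (fun w => -(G.dist p w : ℝ))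
    (lip_negdist hconn p) (tot2 hconn hD hL hreg hBM hp)
  have hx0 : sB G (fun w => -(G.dist p w : ℝ)) x0 = -(L:ℝ) - (D:ℝ) * ((L:ℝ) - 1) :=
    sB_f2_x0 hconn hD hL hreg hBM hp
  have hsp : G.dist p s + 1 = L :=
    S1_pdist hconn hD hL hreg hBM hp s
      ((SimpleGraph.mem_neighborFinset G x0 s).mpr (SimpleGraph.dist_eq_one_iff_adj.mp hs))
  have hsB : sB G (fun w => -(G.dist p w : ℝ)) s
      = -((L:ℝ) - 1) - (L:ℝ) - ((L:ℝ) - 1) * ((nk G x0 s 1).card : ℝ)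
        - ∑ v ∈ nk G x0 s 2, (G.dist p v : ℝ) := by
    rw [sB_eq hconn]
    have h1 : -(G.dist p s : ℝ) = -((L:ℝ) - 1) := by
      have : ((G.dist p s : ℕ):ℝ) + 1 = (L:ℝ) := by exact_mod_cast hsp
      linarith
    rw [h1, split3 (f := fun v => G.dist x0 v) (nbr_dist_le2 hconn hs)
      (fun w => -(G.dist p w : ℝ))]
    have e0 : ∑ v ∈ (G.neighborFinset s).filter (fun v => G.dist x0 v = 0),
        -(G.dist p v : ℝ) = -(L:ℝ) := by
      have h' : (G.neighborFinset s).filter (fun v => G.dist x0 v = 0) = nk G x0 s 0 := rfl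
      rw [h', nk0_eq hconn hs, Finset.sum_singleton]
      have : G.dist p x0 = L := by rw [SimpleGraph.dist_comm]; exact hp
      rw [this]
    have e1 : ∑ v ∈ (G.neighborFinset s).filter (fun v => G.dist x0 v = 1),
        -(G.dist p v : ℝ) = -(((L:ℝ) - 1) * ((nk G x0 s 1).card : ℝ)) := by
      have h' : ∀ v ∈ (G.neighborFinset s).filter (fun v => G.dist x0 v = 1),
          -(G.dist p v : ℝ) = -((L:ℝ) - 1) := by
        intro v hv
        rw [Finset.mem_filter] at hv
        have hv1 : G.dist p v + 1 = L :=
          S1_pdist hconn hD hL hreg hBM hp v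
            ((SimpleGraph.mem_neighborFinset G x0 v).mpr
              (SimpleGraph.dist_eq_one_iff_adj.mp hv.2))
        have : ((G.dist p v : ℕ):ℝ) + 1 = (L:ℝ) := by exact_mod_cast hv1
        linarith
      rw [Finset.sum_congr rfl h', Finset.sum_const, nsmul_eq_mul]
      have h'' : (G.neighborFinset s).filter (fun v => G.dist x0 v = 1) = nk G x0 s 1 := rfl
      rw [h'']
      ring
    have e2 : ∑ v ∈ (G.neighborFinset s).filter (fun v => G.dist x0 v = 2),
        -(G.dist p v : ℝ) = -∑ v ∈ nk G x0 s 2, (G.dist p v : ℝ) := by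
      have h'' : (G.neighborFinset s).filter (fun v => G.dist x0 v = 2) = nk G x0 s 2 := rfl
      rw [h'', Finset.sum_neg_distrib]
    rw [e0, e1, e2]
    ring
  rw [hx0, hsB] at ht
  -- derive the sum identity
  have hdp : ((nk G x0 s 2).card : ℝ) = wq D L := dplus_eq hconn hD hL hreg hBM hp hs
  have hcards := nk_card_split hconn hreg hs
  have hcards' : ((nk G x0 s 1).card : ℝ) + ((nk G x0 s 2).card : ℝ) + 1 = (D : ℝ) := by
    have h' : (1 + (nk G x0 s 1).card + (nk G x0 s 2).card : ℕ) = D := hcards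
    push_cast [← h']
    ring
  have hsum : ∑ v ∈ nk G x0 s 2, (G.dist p v : ℝ)
      ≤ ((nk G x0 s 2).card : ℝ) * ((L - 2 : ℕ) : ℝ) := by
    have hc : ((L - 2 : ℕ) : ℝ) = (L:ℝ) - 2 := by
      push_cast [Nat.cast_sub hL2]
      ring
    rw [hc]
    -- from ht : (stuff) - (stuff) = wq D L
    -- Σ = (L-1)*(D-1-c1) - wq = (L-1)*c2 - c2
    nlinarith [ht, hdp, hcards']
  have hlow : ∀ v ∈ nk G x0 s 2, L - 2 ≤ G.dist p v := by
    intro v hv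
    rw [mem_nk] at hv
    have h2 : G.dist x0 p ≤ G.dist x0 v + G.dist v p := hconn.dist_triangle
    have h3 : G.dist v p = G.dist p v := SimpleGraph.dist_comm
    omega
  have := forced_eq hlow hsum
  intro v hv
  have h := this v hv
  omega

/-- every level-2 vertex has a parent -/
lemma parent_exists (hconn : G.Connected) {y : V} (hy : G.dist x0 y = 2) :
    ∃ s : V, G.dist x0 s = 1 ∧ G.Adj s y := by
  obtain ⟨w, hw⟩ := hconn.exists_walk_length_eq_dist x0 y
  rw [hy] at hw
  refine ⟨w.getVert 1, ?_, ?_⟩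
  · have hadj : G.Adj x0 (w.getVert 1) := by
      have := w.adj_getVert_succ (i := 0) (by omega)
      rwa [SimpleGraph.Walk.getVert_zero] at this
    exact SimpleGraph.dist_eq_one_iff_adj.mpr hadj
  · have := w.adj_getVert_succ (i := 1) (by omega)
    have h2 : w.getVert 2 = y := by
      have := SimpleGraph.Walk.getVert_length w
      rwa [hw] at this
    rwa [h2] at this

/-- every level-2 vertex is at distance L-2 from p -/
lemma S2_pdist (hconn : G.Connected) (hD : 0 < D) (hL2 : 2 ≤ L)
    (hreg : G.IsRegularOfDegree D) (hBM : BMSharp G D L) (hp : G.dist x0 p = L)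
    {y : V} (hy : G.dist x0 y = 2) : G.dist p y + 2 = L := by
  obtain ⟨s, hs, hsy⟩ := parent_exists hconn hy
  exact child_pdist hconn hD hL2 hreg hBM hp hs y (mem_nk.mpr ⟨hsy, hy⟩)

/-- tightness of a vertical edge from level 1 to level 2 -/
lemma tight12 (hconn : G.Connected) (hD : 0 < D) (hL2 : 2 ≤ L)
    (hreg : G.IsRegularOfDegree D) (hBM : BMSharp G D L) (hp : G.dist x0 p = L)
    {s y : V} (hs : G.dist x0 s = 1) (hsy : G.Adj s y) (hy : G.dist x0 y = 2)
    (g : V → ℝ) (hg : ∀ u v : V, g v - g u ≤ G.dist u v)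
    (htot : sB G g p - sB G g x0 = (L:ℝ) * wq D L) :
    sB G g y - sB G g s = wq D L := by
  have hL : 0 < L := by omega
  have hadj : G.Adj x0 s := SimpleGraph.dist_eq_one_iff_adj.mp hs
  have hyp : G.dist p y + 2 = L := S2_pdist hconn hD hL2 hreg hBM hp hy
  have hyp' : G.dist y p + 2 = L := by
    have : G.dist y p = G.dist p y := SimpleGraph.dist_comm
    omega
  obtain ⟨γ, hγ⟩ := hconn.exists_walk_length_eq_dist y p
  set w : G.Walk x0 p := SimpleGraph.Walk.cons hadj (SimpleGraph.Walk.cons hsy γ) with hw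
  have hlen : w.length = L := by
    rw [hw, SimpleGraph.Walk.length_cons, SimpleGraph.Walk.length_cons, hγ]
    omega
  have h := steps_eq hconn hD hL hreg hBM g hg w hlen htot 1 (by omega)
  have h1 : w.getVert 1 = s := by
    rw [hw, SimpleGraph.Walk.getVert_cons_succ]
    exact SimpleGraph.Walk.getVert_zero _
  have h2 : w.getVert 2 = y := by
    rw [hw, SimpleGraph.Walk.getVert_cons_succ, SimpleGraph.Walk.getVert_cons_succ]
    exact SimpleGraph.Walk.getVert_zero γ
  rw [h1, h2] at h
  exact h

end Structure3

section Perturb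

variable [Fintype V] {G : SimpleGraph V} {D L : ℕ} {x0 p : V}

omit [Fintype V] in
lemma adj_level (hconn : G.Connected) {c d : V} (hcd : G.Adj c d) :
    G.dist x0 d ≤ G.dist x0 c + 1 ∧ G.dist x0 c ≤ G.dist x0 d + 1 := by
  have h1 : G.dist c d = 1 := SimpleGraph.dist_eq_one_iff_adj.mpr hcd
  have h1' : G.dist d c = 1 := by
    rw [SimpleGraph.dist_comm]; exact h1
  have h2 : G.dist x0 d ≤ G.dist x0 c + G.dist c d := hconn.dist_triangle
  have h3 : G.dist x0 c ≤ G.dist x0 d + G.dist d c := hconn.dist_triangle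
  omega

/-- perturbation inequality for a downward-closed set -/
lemma T1 (hconn : G.Connected) (hD : 0 < D) (hL : 0 < L)
    (hreg : G.IsRegularOfDegree D) (hBM : BMSharp G D L)
    {a b : V} (hab : G.Adj a b)
    (htight : sB G (fX G x0) b - sB G (fX G x0) a = wq D L)
    (Z : Finset V)
    (hZ : ∀ c d : V, G.Adj c d → G.dist x0 c < G.dist x0 d → d ∈ Z → c ∈ Z) :
    ((bll G b) ∩ Z).card ≤ ((bll G a) ∩ Z).card := by
  classical
  set g : V → ℝ := fun v => fX G x0 v + (if v ∈ Z then (1:ℝ) else 0) with hgdef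
  have hedge : ∀ c d : V, G.Adj c d → g d - g c ≤ 1 := by
    intro c d hcd
    obtain ⟨hd1, hd2⟩ := adj_level (x0 := x0) hconn hcd
    rw [hgdef]
    simp only
    by_cases hlt : G.dist x0 c < G.dist x0 d
    · have heq : G.dist x0 d = G.dist x0 c + 1 := by omega
      have hfx : fX G x0 d - fX G x0 c = 1 := by
        simp only [fX, heq]
        push_cast
        ring
      by_cases hdZ : d ∈ Z
      · have hcZ : c ∈ Z := hZ c d hcd hlt hdZ
        simp only [hdZ, hcZ, if_pos]
        linarith
      · simp only [hdZ, if_neg, not_false_iff]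
        by_cases hcZ : c ∈ Z <;> simp [hcZ] <;> linarith
    · have hfx : fX G x0 d - fX G x0 c ≤ 0 := by
        simp only [fX]
        have : G.dist x0 d ≤ G.dist x0 c := by omega
        have := (Nat.cast_le (α := ℝ)).mpr this
        linarith
      by_cases hdZ : d ∈ Z <;> by_cases hcZ : c ∈ Z <;> simp [hdZ, hcZ] <;> linarith
  have hlip := lip_of_adj hconn g hedge
  have hm := master hconn hD hL hreg hBM g hlip hab
  have hsplit : ∀ x : V, sB G g x = sB G (fX G x0) x + (((bll G x) ∩ Z).card : ℝ) := by
    intro x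
    rw [sB, sB, hgdef]
    rw [Finset.sum_add_distrib]
    congr 1
    rw [Finset.sum_boole, Finset.filter_mem_eq_inter]
  rw [hsplit a, hsplit b] at hm
  have hwq : wq D L = ((D:ℝ) + 1) - 2 * D / (L:ℝ) := rfl
  rw [← hwq] at hm
  have : (((bll G b) ∩ Z).card : ℝ) ≤ (((bll G a) ∩ Z).card : ℝ) := by linarith
  exact_mod_cast this

/-- perturbation inequality for an upward-closed set -/
lemma T2 (hconn : G.Connected) (hD : 0 < D) (hL : 0 < L)
    (hreg : G.IsRegularOfDegree D) (hBM : BMSharp G D L)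
    {a b : V} (hab : G.Adj a b)
    (htight : sB G (fX G x0) b - sB G (fX G x0) a = wq D L)
    (Z : Finset V)
    (hZ : ∀ c d : V, G.Adj c d → G.dist x0 c < G.dist x0 d → c ∈ Z → d ∈ Z) :
    ((bll G a) ∩ Z).card ≤ ((bll G b) ∩ Z).card := by
  classical
  set g : V → ℝ := fun v => fX G x0 v - (if v ∈ Z then (1:ℝ) else 0) with hgdef
  have hedge : ∀ c d : V, G.Adj c d → g d - g c ≤ 1 := by
    intro c d hcd
    obtain ⟨hd1, hd2⟩ := adj_level (x0 := x0) hconn hcd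
    rw [hgdef]
    simp only
    by_cases hlt : G.dist x0 c < G.dist x0 d
    · have heq : G.dist x0 d = G.dist x0 c + 1 := by omega
      have hfx : fX G x0 d - fX G x0 c = 1 := by
        simp only [fX, heq]
        push_cast
        ring
      by_cases hcZ : c ∈ Z
      · have hdZ : d ∈ Z := hZ c d hcd hlt hcZ
        simp only [hdZ, hcZ, if_pos]
        linarith
      · by_cases hdZ : d ∈ Z <;> simp [hdZ, hcZ] <;> linarith
    · have hfx : fX G x0 d - fX G x0 c ≤ 0 := by
        simp only [fX]
        have : G.dist x0 d ≤ G.dist x0 c := by omega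
        have := (Nat.cast_le (α := ℝ)).mpr this
        linarith
      by_cases hdZ : d ∈ Z <;> by_cases hcZ : c ∈ Z <;> simp [hdZ, hcZ] <;> linarith
  have hlip := lip_of_adj hconn g hedge
  have hm := master hconn hD hL hreg hBM g hlip hab
  have hsplit : ∀ x : V, sB G g x = sB G (fX G x0) x - (((bll G x) ∩ Z).card : ℝ) := by
    intro x
    rw [sB, sB, hgdef]
    rw [Finset.sum_sub_distrib]
    congr 1
    rw [Finset.sum_boole, Finset.filter_mem_eq_inter]
  rw [hsplit a, hsplit b] at hm
  have hwq : wq D L = ((D:ℝ) + 1) - 2 * D / (L:ℝ) := rfl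
  rw [← hwq] at hm
  have : (((bll G a) ∩ Z).card : ℝ) ≤ (((bll G b) ∩ Z).card : ℝ) := by linarith
  exact_mod_cast this

end Perturb

section Comb

variable [Fintype V] {G : SimpleGraph V} {D L : ℕ} {x0 p : V}

lemma mem_bll_iff (hconn : G.Connected) {a v : V} :
    v ∈ bll G a ↔ v = a ∨ G.Adj a v := by
  rw [bll_eq hconn]
  simp [SimpleGraph.mem_neighborFinset]

omit [Fintype V] in
lemma eq_x0_of_level0 (hconn : G.Connected) {c : V} (h : G.dist x0 c = 0) : c = x0 :=
  ((hconn.dist_eq_zero_iff).mp h).symm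

/-- the set of co-parents of y not adjacent to s -/
noncomputable def Pns (G : SimpleGraph V) [Fintype V] (x0 s y : V) : Finset V :=
  univ.filter (fun z => G.dist x0 z = 1 ∧ G.Adj z y ∧ ¬ G.Adj s z ∧ z ≠ s)

/-- downward closed set {x0} ∪ (S1 \ N[s]) -/
noncomputable def Zs (G : SimpleGraph V) [Fintype V] (x0 s : V) : Finset V :=
  insert x0 (univ.filter (fun v => G.dist x0 v = 1 ∧ ¬ G.Adj s v ∧ v ≠ s))

lemma Zs_down (hconn : G.Connected) (s : V) :
    ∀ c d : V, G.Adj c d → G.dist x0 c < G.dist x0 d → d ∈ Zs G x0 s → c ∈ Zs G x0 s := by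
  intro c d hcd hlt hd
  rw [Zs, Finset.mem_insert] at hd
  rcases hd with heq | hd
  · exfalso
    have h0 : G.dist x0 d = 0 := by rw [heq, SimpleGraph.dist_self]
    omega
  · rw [Finset.mem_filter] at hd
    have : G.dist x0 c = 0 := by omega
    rw [Zs, Finset.mem_insert]
    exact Or.inl (eq_x0_of_level0 hconn this)

lemma bll_inter_Zs (hconn : G.Connected) {s : V} (hs : G.dist x0 s = 1) :
    (bll G s) ∩ (Zs G x0 s) = {x0} := by
  ext v
  rw [Finset.mem_inter, Finset.mem_singleton, mem_bll_iff hconn, Zs, Finset.mem_insert,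
    Finset.mem_filter]
  constructor
  · rintro ⟨hv1, hins⟩
    rcases hins with heq | hv2
    · exact heq
    · exfalso
      obtain ⟨_, hlev, hnadj, hnes⟩ := hv2
      rcases hv1 with heq2 | hadj
      · exact hnes heq2
      · exact hnadj hadj
  · intro hveq
    rw [hveq]
    have hadj : G.Adj s x0 := (SimpleGraph.dist_eq_one_iff_adj.mp hs).symm
    exact ⟨Or.inr hadj, Or.inl rfl⟩

/-- every other parent of y is adjacent to s, provided s' is a nonadjacent co-parent -/
lemma parents_adj (hconn : G.Connected) (hD : 0 < D) (hL2 : 2 ≤ L)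
    (hreg : G.IsRegularOfDegree D) (hBM : BMSharp G D L) (hp : G.dist x0 p = L)
    {s s' y : V} (hs : G.dist x0 s = 1) (hs' : G.dist x0 s' = 1)
    (hss' : ¬ G.Adj s s') (hne : s' ≠ s)
    (hsy : G.Adj s y) (hs'y : G.Adj s' y) (hy : G.dist x0 y = 2)
    {z : V} (hz : G.dist x0 z = 1) (hzy : G.Adj z y) (hzs : z ≠ s) (hzs' : z ≠ s') :
    G.Adj s z := by
  have hL : 0 < L := by omega
  by_contra hnadj
  have htight := tight12 hconn hD hL2 hreg hBM hp hs hsy hy (fX G x0) (lip_fX hconn x0)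
    (tot1 hconn hD hL hreg hBM hp)
  have hT := T1 hconn hD hL hreg hBM hsy htight (Zs G x0 s) (Zs_down hconn s)
  rw [bll_inter_Zs hconn hs] at hT
  -- bll y ∩ Zs contains s' and z, two distinct elements
  have hmem : ∀ t : V, G.dist x0 t = 1 → G.Adj t y → ¬ G.Adj s t → t ≠ s →
      t ∈ (bll G y) ∩ (Zs G x0 s) := by
    intro t ht hty hts htns
    rw [Finset.mem_inter, mem_bll_iff hconn, Zs, Finset.mem_insert, Finset.mem_filter]
    exact ⟨Or.inr hty.symm, Or.inr ⟨Finset.mem_univ t, ht, hts, htns⟩⟩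
  have hs'mem := hmem s' hs' hs'y hss' hne
  have hzmem := hmem z hz hzy hnadj hzs
  have hsub : {s', z} ⊆ (bll G y) ∩ (Zs G x0 s) := by
    intro t ht
    rw [Finset.mem_insert, Finset.mem_singleton] at ht
    rcases ht with rfl | rfl
    · exact hs'mem
    · exact hzmem
  have hcard2 : ({s', z} : Finset V).card = 2 := by
    rw [Finset.card_insert_of_notMem (by simp [Ne.symm hzs']), Finset.card_singleton]
  have := Finset.card_le_card hsub
  rw [hcard2] at this
  rw [Finset.card_singleton] at hT
  omega

/-- uniqueness of the nonadjacent co-parent: at most one -/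
lemma coparent_le_one (hconn : G.Connected) (hD : 0 < D) (hL2 : 2 ≤ L)
    (hreg : G.IsRegularOfDegree D) (hBM : BMSharp G D L) (hp : G.dist x0 p = L)
    {s y : V} (hs : G.dist x0 s = 1) (hsy : G.Adj s y) (hy : G.dist x0 y = 2) :
    (Pns G x0 s y).card ≤ 1 := by
  have hL : 0 < L := by omega
  have htight := tight12 hconn hD hL2 hreg hBM hp hs hsy hy (fX G x0) (lip_fX hconn x0)
    (tot1 hconn hD hL hreg hBM hp)
  have hT := T1 hconn hD hL hreg hBM hsy htight (Zs G x0 s) (Zs_down hconn s)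
  rw [bll_inter_Zs hconn hs] at hT
  have heq : (bll G y) ∩ (Zs G x0 s) = Pns G x0 s y := by
    ext v
    rw [Finset.mem_inter, mem_bll_iff hconn, Zs, Finset.mem_insert, Finset.mem_filter,
      Pns, Finset.mem_filter]
    constructor
    · rintro ⟨hv1, hins⟩
      rcases hins with heq2 | hv2
      · exfalso
        rcases hv1 with h | h
        · have hyx : y = x0 := by rw [← h, heq2]
          rw [hyx, SimpleGraph.dist_self] at hy
          omega
        · have hadj : G.Adj y x0 := heq2 ▸ h
          have h1 := SimpleGraph.dist_eq_one_iff_adj.mpr hadj.symm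
          omega
      · obtain ⟨_, hlev, hns, hnes⟩ := hv2
        rcases hv1 with heq3 | hadj
        · exfalso
          rw [heq3] at hlev
          omega
        · exact ⟨Finset.mem_univ v, hlev, hadj.symm, hns, hnes⟩
    · rintro ⟨_, hlev, hadj, hns, hnes⟩
      exact ⟨Or.inr hadj.symm, Or.inr ⟨Finset.mem_univ v, hlev, hns, hnes⟩⟩
  rw [heq] at hT
  rwa [Finset.card_singleton] at hT

end Comb

section Comb2

variable [Fintype V] {G : SimpleGraph V} {D L : ℕ} {x0 p : V}

/-- parents of y -/
noncomputable def Pfin (G : SimpleGraph V) [Fintype V] (x0 y : V) : Finset V :=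
  univ.filter (fun z => G.dist x0 z = 1 ∧ G.Adj z y)

/-- there exists a nonadjacent co-parent -/
lemma coparent_card (hconn : G.Connected) (hD : 0 < D) (hL2 : 2 ≤ L)
    (hreg : G.IsRegularOfDegree D) (hBM : BMSharp G D L) (hp : G.dist x0 p = L)
    {s y : V} (hs : G.dist x0 s = 1) (hsy : G.Adj s y) (hy : G.dist x0 y = 2) :
    (Pns G x0 s y).card = 1 := by
  have hL : 0 < L := by omega
  refine le_antisymm (coparent_le_one hconn hD hL2 hreg hBM hp hs hsy hy) ?_
  -- lower bound via T1 on the edge (x0, s)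
  set Z2 : Finset V := insert x0 (insert y (Pfin G x0 y)) with hZ2
  have hdown : ∀ c d : V, G.Adj c d → G.dist x0 c < G.dist x0 d → d ∈ Z2 → c ∈ Z2 := by
    intro c d hcd hlt hd
    rw [hZ2, Finset.mem_insert, Finset.mem_insert] at hd
    rcases hd with heq | heq | hd
    · exfalso
      have h0 : G.dist x0 d = 0 := by rw [heq, SimpleGraph.dist_self]
      omega
    · -- d = y
      obtain ⟨h1, h2⟩ := adj_level (x0 := x0) hconn hcd
      have hdy : G.dist x0 d = 2 := by rw [heq]; exact hy
      have hc1 : G.dist x0 c = 1 := by omega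
      rw [hZ2, Finset.mem_insert, Finset.mem_insert]
      refine Or.inr (Or.inr ?_)
      rw [Pfin, Finset.mem_filter]
      exact ⟨Finset.mem_univ c, hc1, heq ▸ hcd⟩
    · rw [Pfin, Finset.mem_filter] at hd
      have hc0 : G.dist x0 c = 0 := by omega
      rw [hZ2, Finset.mem_insert]
      exact Or.inl (eq_x0_of_level0 hconn hc0)
  have htight := tight01 hconn hD hL hreg hBM hp hs (fX G x0) (lip_fX hconn x0)
    (tot1 hconn hD hL hreg hBM hp)
  have hadjs : G.Adj x0 s := SimpleGraph.dist_eq_one_iff_adj.mp hs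
  have hT := T1 hconn hD hL hreg hBM hadjs htight Z2 hdown
  have hx0Z : (bll G x0) ∩ Z2 = insert x0 (Pfin G x0 y) := by
    ext v
    rw [Finset.mem_inter, mem_bll_iff hconn, hZ2, Finset.mem_insert, Finset.mem_insert,
      Finset.mem_insert]
    constructor
    · rintro ⟨hv1, heq | heq | hv2⟩
      · exact Or.inl heq
      · exfalso
        rcases hv1 with h | h
        · rw [h] at heq
          rw [heq, SimpleGraph.dist_self] at hy
          omega
        · have h1 := SimpleGraph.dist_eq_one_iff_adj.mpr h
          rw [heq] at h1
          omega
      · exact Or.inr hv2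
    · rintro (heq | hv)
      · exact ⟨Or.inl heq, Or.inl heq⟩
      · have hlev : G.dist x0 v = 1 := by
          rw [Pfin, Finset.mem_filter] at hv
          exact hv.2.1
        exact ⟨Or.inr (SimpleGraph.dist_eq_one_iff_adj.mp hlev), Or.inr (Or.inr hv)⟩
  have hsZ : (bll G s) ∩ Z2 = insert x0 (insert y ((Pfin G x0 y) ∩ (bll G s))) := by
    ext v
    rw [Finset.mem_inter, mem_bll_iff hconn, hZ2, Finset.mem_insert, Finset.mem_insert,
      Finset.mem_insert, Finset.mem_insert, Finset.mem_inter, mem_bll_iff hconn]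
    constructor
    · rintro ⟨hv1, heq | heq | hv2⟩
      · exact Or.inl heq
      · exact Or.inr (Or.inl heq)
      · exact Or.inr (Or.inr ⟨hv2, hv1⟩)
    · rintro (heq | heq | ⟨hv2, hv1⟩)
      · refine ⟨Or.inr ?_, Or.inl heq⟩
        rw [heq]
        exact hadjs.symm
      · refine ⟨Or.inr ?_, Or.inr (Or.inl heq)⟩
        rw [heq]
        exact hsy
      · exact ⟨hv1, Or.inr (Or.inr hv2)⟩
  rw [hx0Z, hsZ] at hT
  have hx0notP : x0 ∉ Pfin G x0 y := by
    rw [Pfin, Finset.mem_filter]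
    rw [SimpleGraph.dist_self]
    simp
  have hynotP : y ∉ (Pfin G x0 y) ∩ (bll G s) := by
    rw [Finset.mem_inter, Pfin, Finset.mem_filter]
    intro h
    rw [h.1.2.1] at hy
    omega
  have hx0ne : x0 ∉ insert y ((Pfin G x0 y) ∩ (bll G s)) := by
    rw [Finset.mem_insert]
    rintro (heq | hmem)
    · rw [← heq, SimpleGraph.dist_self] at hy
      omega
    · rw [Finset.mem_inter] at hmem
      exact hx0notP hmem.1
  rw [Finset.card_insert_of_notMem hx0notP, Finset.card_insert_of_notMem hx0ne,
    Finset.card_insert_of_notMem hynotP] at hT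
  have hsplit : ((Pfin G x0 y) ∩ (bll G s)).card + ((Pfin G x0 y) \ (bll G s)).card
      = (Pfin G x0 y).card := Finset.card_inter_add_card_sdiff _ _
  have hPns : Pns G x0 s y = (Pfin G x0 y) \ (bll G s) := by
    ext z
    rw [Pns, Finset.mem_filter, Finset.mem_sdiff, Pfin, Finset.mem_filter,
      mem_bll_iff hconn]
    constructor
    · rintro ⟨_, hlev, hadj, hns, hnes⟩
      refine ⟨⟨Finset.mem_univ z, hlev, hadj⟩, ?_⟩
      rintro (heq | hadj2)
      · exact hnes heq
      · exact hns hadj2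
    · rintro ⟨⟨_, hlev, hadj⟩, hnot⟩
      push_neg at hnot
      exact ⟨Finset.mem_univ z, hlev, hadj, hnot.2, hnot.1⟩
  rw [hPns]
  omega

/-- nonadjacent vertices in S1 have a common child -/
lemma common_child_exists (hconn : G.Connected) (hD : 0 < D) (hL : 0 < L)
    (hreg : G.IsRegularOfDegree D) (hBM : BMSharp G D L) (hp : G.dist x0 p = L)
    {s s' : V} (hs : G.dist x0 s = 1) (hs' : G.dist x0 s' = 1)
    (hss' : ¬ G.Adj s s') (hne : s' ≠ s) :
    ∃ y : V, G.dist x0 y = 2 ∧ G.Adj s y ∧ G.Adj s' y := by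
  set Z3 : Finset V := univ.filter (fun v => G.dist s' v < G.dist x0 v) with hZ3
  have hup : ∀ c d : V, G.Adj c d → G.dist x0 c < G.dist x0 d → c ∈ Z3 → d ∈ Z3 := by
    intro c d hcd hlt hc
    rw [hZ3, Finset.mem_filter] at hc ⊢
    refine ⟨Finset.mem_univ d, ?_⟩
    have h1 : G.dist c d = 1 := SimpleGraph.dist_eq_one_iff_adj.mpr hcd
    have h2 : G.dist s' d ≤ G.dist s' c + G.dist c d := hconn.dist_triangle
    omega
  have htight := tight01 hconn hD hL hreg hBM hp hs (fX G x0) (lip_fX hconn x0)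
    (tot1 hconn hD hL hreg hBM hp)
  have hadjs : G.Adj x0 s := SimpleGraph.dist_eq_one_iff_adj.mp hs
  have hT := T2 hconn hD hL hreg hBM hadjs htight Z3 hup
  have hx0Z : (bll G x0) ∩ Z3 = {s'} := by
    ext v
    rw [Finset.mem_inter, mem_bll_iff hconn, hZ3, Finset.mem_filter, Finset.mem_singleton]
    constructor
    · rintro ⟨hv1, _, hv2⟩
      rcases hv1 with heq | hadj
      · exfalso
        rw [heq, SimpleGraph.dist_self] at hv2
        omega
      · have hlev : G.dist x0 v = 1 := SimpleGraph.dist_eq_one_iff_adj.mpr hadj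
        have : G.dist s' v = 0 := by omega
        exact eq_x0_of_level0 (x0 := s') hconn this
    · intro hveq
      rw [hveq]
      refine ⟨Or.inr (SimpleGraph.dist_eq_one_iff_adj.mp hs'), Finset.mem_univ s', ?_⟩
      rw [SimpleGraph.dist_self, hs']
      omega
  rw [hx0Z, Finset.card_singleton] at hT
  have hnon : ((bll G s) ∩ Z3).Nonempty := by
    rw [← Finset.card_pos]
    omega
  obtain ⟨v, hv⟩ := hnon
  rw [Finset.mem_inter, mem_bll_iff hconn, hZ3, Finset.mem_filter] at hv
  obtain ⟨hv1, _, hv2⟩ := hv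
  rcases hv1 with heq | hadj
  · exfalso
    rw [heq] at hv2
    rw [hs] at hv2
    have : G.dist s' s = 0 := by omega
    have := eq_x0_of_level0 (x0 := s') hconn this
    exact hne this.symm
  · have hlev2 : G.dist x0 v ≤ 2 := nbr_dist_le2 hconn hs v
      ((SimpleGraph.mem_neighborFinset G s v).mpr hadj)
    have hcase : G.dist x0 v = 2 := by
      by_contra hne2
      have h01 : G.dist x0 v = 0 ∨ G.dist x0 v = 1 := by omega
      rcases h01 with h0 | h1
      · omega
      · have : G.dist s' v = 0 := by omega
        have hveq := eq_x0_of_level0 (x0 := s') hconn this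
        rw [hveq] at hadj
        exact hss' hadj
    have hd1 : G.dist s' v ≤ 1 := by omega
    have hadj' : G.Adj s' v := by
      have h01 : G.dist s' v = 0 ∨ G.dist s' v = 1 := by omega
      rcases h01 with h0 | h1
      · exfalso
        have := eq_x0_of_level0 (x0 := s') hconn h0
        rw [this] at hcase
        rw [hs'] at hcase
        omega
      · exact SimpleGraph.dist_eq_one_iff_adj.mp h1
    exact ⟨v, hcase, hadj, hadj'⟩

end Comb2

section Comb3

variable [Fintype V] {G : SimpleGraph V} {D L : ℕ} {x0 p : V}

/-- level-1 vertices not adjacent to s (and not s) -/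
noncomputable def NNs (G : SimpleGraph V) [Fintype V] (x0 s : V) : Finset V :=
  univ.filter (fun v => G.dist x0 v = 1 ∧ ¬ G.Adj s v ∧ v ≠ s)

/-- common children at level 2 -/
noncomputable def common2 (G : SimpleGraph V) [Fintype V] (x0 s s' : V) : Finset V :=
  univ.filter (fun y => G.dist x0 y = 2 ∧ G.Adj s y ∧ G.Adj s' y)

lemma NNs_card (hconn : G.Connected) (hreg : G.IsRegularOfDegree D)
    {s : V} (hs : G.dist x0 s = 1) :
    (NNs G x0 s).card = (nk G x0 s 2).card := by
  classical
  set S1f : Finset V := univ.filter (fun v => G.dist x0 v = 1) with hS1f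
  have hS1card : S1f.card = D := by
    have he : S1f = G.neighborFinset x0 := by
      ext v
      rw [hS1f, Finset.mem_filter, SimpleGraph.mem_neighborFinset]
      constructor
      · rintro ⟨_, h⟩
        exact SimpleGraph.dist_eq_one_iff_adj.mp h
      · intro h
        exact ⟨Finset.mem_univ v, SimpleGraph.dist_eq_one_iff_adj.mpr h⟩
    rw [he, G.card_neighborFinset_eq_degree, hreg x0]
  have hsub : insert s (nk G x0 s 1) ⊆ S1f := by
    intro v hv
    rw [Finset.mem_insert] at hv
    rw [hS1f, Finset.mem_filter]
    rcases hv with heq | hv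
    · rw [heq]
      exact ⟨Finset.mem_univ s, hs⟩
    · rw [mem_nk] at hv
      exact ⟨Finset.mem_univ v, hv.2⟩
  have hNN : NNs G x0 s = S1f \ insert s (nk G x0 s 1) := by
    ext v
    rw [NNs, Finset.mem_filter, Finset.mem_sdiff, hS1f, Finset.mem_filter,
      Finset.mem_insert, mem_nk]
    constructor
    · rintro ⟨_, hlev, hnadj, hne⟩
      refine ⟨⟨Finset.mem_univ v, hlev⟩, ?_⟩
      rintro (heq | ⟨ha, _⟩)
      · exact hne heq
      · exact hnadj ha
    · rintro ⟨⟨_, hlev⟩, hnot⟩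
      refine ⟨Finset.mem_univ v, hlev, ?_, ?_⟩
      · intro ha
        exact hnot (Or.inr ⟨ha, hlev⟩)
      · intro heq
        exact hnot (Or.inl heq)
  have hins : (insert s (nk G x0 s 1)).card = (nk G x0 s 1).card + 1 := by
    rw [Finset.card_insert_of_notMem]
    rw [mem_nk]
    rintro ⟨ha, _⟩
    exact G.irrefl ha
  have hsplit := nk_card_split hconn hreg hs
  rw [hNN, Finset.card_sdiff_of_subset hsub, hS1card, hins]
  omega

/-- uniqueness of common children of nonadjacent level-1 vertices -/
lemma common2_card (hconn : G.Connected) (hD : 0 < D) (hL2 : 2 ≤ L)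
    (hreg : G.IsRegularOfDegree D) (hBM : BMSharp G D L) (hp : G.dist x0 p = L)
    {s s' : V} (hs : G.dist x0 s = 1) (hs' : G.dist x0 s' = 1)
    (hss' : ¬ G.Adj s s') (hne : s' ≠ s) :
    (common2 G x0 s s').card = 1 := by
  classical
  have hL : 0 < L := by omega
  have hge : ∀ t ∈ NNs G x0 s, 1 ≤ (common2 G x0 s t).card := by
    intro t ht
    rw [NNs, Finset.mem_filter] at ht
    obtain ⟨_, hlev, hnadj, hnes⟩ := ht
    obtain ⟨y, hy2, hsy, hty⟩ := common_child_exists hconn hD hL hreg hBM hp hs hlev hnadj hnes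
    refine Finset.card_pos.mpr ⟨y, ?_⟩
    rw [common2, Finset.mem_filter]
    exact ⟨Finset.mem_univ y, hy2, hsy, hty⟩
  have he1 : ∀ t : V, common2 G x0 s t = (nk G x0 s 2).filter (fun y => G.Adj t y) := by
    intro t
    ext y
    rw [common2, Finset.mem_filter, Finset.mem_filter, mem_nk]
    constructor
    · rintro ⟨_, h2, hsy, hty⟩
      exact ⟨⟨hsy, h2⟩, hty⟩
    · rintro ⟨⟨hsy, h2⟩, hty⟩
      exact ⟨Finset.mem_univ y, h2, hsy, hty⟩
  have he2 : ∀ y : V, Pns G x0 s y = (NNs G x0 s).filter (fun z => G.Adj z y) := by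
    intro y
    ext z
    rw [Pns, Finset.mem_filter, Finset.mem_filter, NNs, Finset.mem_filter]
    constructor
    · rintro ⟨_, hlev, hzy, hns, hnes⟩
      exact ⟨⟨Finset.mem_univ z, hlev, hns, hnes⟩, hzy⟩
    · rintro ⟨⟨_, hlev, hns, hnes⟩, hzy⟩
      exact ⟨Finset.mem_univ z, hlev, hzy, hns, hnes⟩
  have hdc : ∑ t ∈ NNs G x0 s, (common2 G x0 s t).card
      = ∑ y ∈ nk G x0 s 2, (Pns G x0 s y).card := by
    calc ∑ t ∈ NNs G x0 s, (common2 G x0 s t).card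
        = ∑ t ∈ NNs G x0 s, ∑ y ∈ nk G x0 s 2, (if G.Adj t y then 1 else 0) := by
          apply Finset.sum_congr rfl
          intro t _
          rw [he1 t, Finset.card_filter]
      _ = ∑ y ∈ nk G x0 s 2, ∑ t ∈ NNs G x0 s, (if G.Adj t y then 1 else 0) :=
          Finset.sum_comm
      _ = ∑ y ∈ nk G x0 s 2, (Pns G x0 s y).card := by
          apply Finset.sum_congr rfl
          intro y _
          rw [he2 y, Finset.card_filter]
  have hone : ∀ y ∈ nk G x0 s 2, (Pns G x0 s y).card = 1 := by
    intro y hy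
    rw [mem_nk] at hy
    exact coparent_card hconn hD hL2 hreg hBM hp hs hy.1 hy.2
  have htotal : ∑ t ∈ NNs G x0 s, (common2 G x0 s t).card = (NNs G x0 s).card := by
    rw [hdc, Finset.sum_congr rfl hone, Finset.sum_const, smul_eq_mul, mul_one]
    exact (NNs_card hconn hreg hs).symm
  have hforced := forced_eq (m := 1) hge (by
    simp only [Nat.cast_one, mul_one]
    exact_mod_cast htotal.le)
  apply hforced
  rw [NNs, Finset.mem_filter]
  exact ⟨Finset.mem_univ s', hs', hss', hne⟩

/-- triangle lower bound over any edge -/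
lemma tri_ge (hconn : G.Connected) (hD : 0 < D) (hL : 0 < L)
    (hreg : G.IsRegularOfDegree D) (hBM : BMSharp G D L)
    {a b : V} (hab : G.Adj a b) :
    (D:ℝ) - 1 - ((univ.filter (fun v => G.Adj a v ∧ G.Adj b v)).card : ℝ) ≤ wq D L := by
  classical
  set g : V → ℝ := fun v => -((min (G.dist b v) 2 : ℕ) : ℝ) with hg
  have hedge : ∀ c d : V, G.Adj c d → g d - g c ≤ 1 := by
    intro c d hcd
    have h1 : G.dist c d = 1 := SimpleGraph.dist_eq_one_iff_adj.mpr hcd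
    have h1' : G.dist d c = 1 := by rw [SimpleGraph.dist_comm]; exact h1
    have h2 : G.dist b d ≤ G.dist b c + G.dist c d := hconn.dist_triangle
    have h3 : G.dist b c ≤ G.dist b d + G.dist d c := hconn.dist_triangle
    have hmin : (min (G.dist b c) 2 : ℕ) ≤ (min (G.dist b d) 2 : ℕ) + 1 := by omega
    have hcast := (Nat.cast_le (α := ℝ)).mpr hmin
    show -((min (G.dist b d) 2 : ℕ) : ℝ) - -((min (G.dist b c) 2 : ℕ) : ℝ) ≤ 1
    push_cast at hcast ⊢
    linarith
  have hlip := lip_of_adj hconn g hedge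
  have hm := master hconn hD hL hreg hBM g hlip hab
  have hb : sB G g b = -(D:ℝ) := by
    have hgb : g b = 0 := by
      show -((min (G.dist b b) 2 : ℕ) : ℝ) = 0
      rw [SimpleGraph.dist_self]
      norm_num
    have hgv : ∀ v ∈ G.neighborFinset b, g v = -1 := by
      intro v hv
      rw [SimpleGraph.mem_neighborFinset] at hv
      show -((min (G.dist b v) 2 : ℕ) : ℝ) = -1
      rw [SimpleGraph.dist_eq_one_iff_adj.mpr hv]
      have h12 : min (1:ℕ) 2 = 1 := by omega
      rw [h12]
      norm_num
    rw [sB_eq hconn, hgb, zero_add, Finset.sum_congr rfl hgv, Finset.sum_const, nsmul_eq_mul,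
      G.card_neighborFinset_eq_degree, hreg b]
    ring
  have htri : (G.neighborFinset a).filter (fun v => G.Adj b v)
      = univ.filter (fun v => G.Adj a v ∧ G.Adj b v) := by
    ext v
    rw [Finset.mem_filter, Finset.mem_filter, SimpleGraph.mem_neighborFinset]
    constructor
    · rintro ⟨h1, h2⟩
      exact ⟨Finset.mem_univ v, h1, h2⟩
    · rintro ⟨_, h1, h2⟩
      exact ⟨h1, h2⟩
  have hga : g a = -1 := by
    show -((min (G.dist b a) 2 : ℕ) : ℝ) = -1
    have hda : G.dist b a = 1 := by
      rw [SimpleGraph.dist_comm]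
      exact SimpleGraph.dist_eq_one_iff_adj.mpr hab
    rw [hda]
    have h12 : min (1:ℕ) 2 = 1 := by omega
    rw [h12]
    norm_num
  have hgv2 : ∀ v ∈ G.neighborFinset a,
      g v = -(2 - (if v = b then (2:ℝ) else 0) - (if G.Adj b v then (1:ℝ) else 0)) := by
    intro v hv
    rw [SimpleGraph.mem_neighborFinset] at hv
    show -((min (G.dist b v) 2 : ℕ) : ℝ) = _
    by_cases hvb : v = b
    · rw [hvb, SimpleGraph.dist_self]
      have h02 : min (0:ℕ) 2 = 0 := by omega
      rw [h02]
      have hnbb : ¬ G.Adj b b := G.irrefl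
      norm_num [hnbb]
    · by_cases hadjb : G.Adj b v
      · have hd : G.dist b v = 1 := SimpleGraph.dist_eq_one_iff_adj.mpr hadjb
        rw [hd]
        have h12 : min (1:ℕ) 2 = 1 := by omega
        rw [h12]
        norm_num [hvb, hadjb]
      · have h0 : G.dist b v ≠ 0 := by
          intro h
          exact hvb (eq_x0_of_level0 (x0 := b) hconn h)
        have h1 : G.dist b v ≠ 1 := fun h => hadjb (SimpleGraph.dist_eq_one_iff_adj.mp h)
        have hm2 : min (G.dist b v) 2 = 2 := by omega
        rw [hm2]
        norm_num [hvb, hadjb]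
  have ha : sB G g a
      = -(1 + (2*(D:ℝ) - 2 - ((univ.filter (fun v => G.Adj a v ∧ G.Adj b v)).card : ℝ))) := by
    rw [sB_eq hconn, hga, Finset.sum_congr rfl hgv2, Finset.sum_neg_distrib]
    rw [Finset.sum_sub_distrib, Finset.sum_sub_distrib]
    rw [Finset.sum_const, nsmul_eq_mul, G.card_neighborFinset_eq_degree, hreg a]
    rw [Finset.sum_ite_eq' (G.neighborFinset a) b (fun _ => (2:ℝ))]
    rw [Finset.sum_boole, htri]
    have hbmem : b ∈ G.neighborFinset a := (SimpleGraph.mem_neighborFinset G a b).mpr hab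
    rw [if_pos hbmem]
    ring
  rw [hb, ha] at hm
  have hwq : wq D L = (D:ℝ) + 1 - 2*(D:ℝ)/(L:ℝ) := rfl
  rw [hwq]
  linarith

end Comb3

theorem stmt [Fintype V] (G : SimpleGraph V) (hconn : G.Connected)
    (D L : ℕ) (hD : 0 < D) (hL : 0 < L) (hreg : G.IsRegularOfDegree D)
    (hdiam : G.diam = L) (hBM : BMSharp G D L)
    (x0 : V) (hpole : ∃ p, G.dist x0 p = L)
    (x1 xb1 x2 : V) (hx1 : G.dist x0 x1 = 1) (hxb1 : G.dist x0 xb1 = 1)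
    (hx2 : G.dist x0 x2 = 2) (h12 : G.Adj x1 x2) (hb12 : G.Adj xb1 x2)
    (hne : x1 ≠ xb1) (hnadj : ¬ G.Adj x1 xb1)
    (u : V) (hu : G.dist x0 u = 1) (hu1 : u ≠ x1) (hub1 : u ≠ xb1) :
    (G.dist x0 u + G.dist u x2 = G.dist x0 x2) ↔ (G.Adj u x1 ∧ G.Adj u xb1) := by
  classical
  obtain ⟨p, hp⟩ := hpole
  have hL2 : 2 ≤ L := by
    have hne0 : G.diam ≠ 0 := by omega
    have hek : G.ediam ≠ ⊤ := SimpleGraph.ediam_ne_top_of_diam_ne_zero hne0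
    have hdd := SimpleGraph.dist_le_diam hek (u := x0) (v := x2)
    rw [hdiam] at hdd
    omega
  have hLHS : (G.dist x0 u + G.dist u x2 = G.dist x0 x2) ↔ G.Adj u x2 := by
    rw [hu, hx2]
    constructor
    · intro h
      have h1 : G.dist u x2 = 1 := by omega
      exact SimpleGraph.dist_eq_one_iff_adj.mp h1
    · intro h
      have h1 : G.dist u x2 = 1 := SimpleGraph.dist_eq_one_iff_adj.mpr h
      omega
  rw [hLHS]
  constructor
  · intro hux2
    refine ⟨?_, ?_⟩
    · exact (parents_adj hconn hD hL2 hreg hBM hp hx1 hxb1 hnadj (Ne.symm hne)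
        h12 hb12 hx2 hu hux2 hu1 hub1).symm
    · exact (parents_adj hconn hD hL2 hreg hBM hp hxb1 hx1
        (fun h => hnadj h.symm) hne hb12 h12 hx2 hu hux2 hub1 hu1).symm
  · rintro ⟨hux1, huxb1⟩
    by_contra hnux2
    by_cases hex : ∃ y : V, G.dist x0 y = 2 ∧ G.Adj u y ∧ G.Adj x1 y ∧ G.Adj xb1 y
    · obtain ⟨y, hy2, huy, h1y, hb1y⟩ := hex
      have hcc := common2_card hconn hD hL2 hreg hBM hp hx1 hxb1 hnadj (Ne.symm hne)
      have hyx2 : y = x2 := by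
        have hy_mem : y ∈ common2 G x0 x1 xb1 := by
          rw [common2, Finset.mem_filter]
          exact ⟨Finset.mem_univ y, hy2, h1y, hb1y⟩
        have hx2_mem : x2 ∈ common2 G x0 x1 xb1 := by
          rw [common2, Finset.mem_filter]
          exact ⟨Finset.mem_univ x2, hx2, h12, hb12⟩
        exact Finset.card_le_one.mp (le_of_eq hcc) _ hy_mem _ hx2_mem
      rw [hyx2] at huy
      exact hnux2 huy
    · push_neg at hex
      have hchi : ∀ y : V, ∃ z : V,
          (G.dist x0 y = 2 ∧ G.Adj x1 y) → Pns G x0 x1 y = {z} := by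
        intro y
        by_cases h : G.dist x0 y = 2 ∧ G.Adj x1 y
        · obtain ⟨z, hz⟩ := Finset.card_eq_one.mp
            (coparent_card hconn hD hL2 hreg hBM hp hx1 h.2 h.1)
          exact ⟨z, fun _ => hz⟩
        · exact ⟨u, fun hh => absurd hh h⟩
      choose χ hχ using hchi
      set Ycom : Finset V := common2 G x0 x1 u with hYcom
      have hprops : ∀ y ∈ Ycom, G.dist x0 (χ y) = 1 ∧ G.Adj (χ y) y ∧
          ¬ G.Adj x1 (χ y) ∧ χ y ≠ x1 := by
        intro y hy
        rw [hYcom, common2, Finset.mem_filter] at hy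
        obtain ⟨_, hy2, h1y, huy⟩ := hy
        have hsingle := hχ y ⟨hy2, h1y⟩
        have hmem : χ y ∈ Pns G x0 x1 y := by
          rw [hsingle]
          exact Finset.mem_singleton_self _
        rw [Pns, Finset.mem_filter] at hmem
        exact ⟨hmem.2.1, hmem.2.2.1, hmem.2.2.2.1, hmem.2.2.2.2⟩
      have hadj_u_chi : ∀ y ∈ Ycom, G.Adj u (χ y) := by
        intro y hy
        obtain ⟨hlev, hadjy, hnadj1, hne1⟩ := hprops y hy
        rw [hYcom, common2, Finset.mem_filter] at hy
        obtain ⟨_, hy2, h1y, huy⟩ := hy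
        have hune : u ≠ χ y := by
          intro heq
          rw [← heq] at hnadj1
          exact hnadj1 hux1.symm
        exact (parents_adj hconn hD hL2 hreg hBM hp hlev hx1
          (fun h => hnadj1 h.symm) (Ne.symm hne1) hadjy h1y hy2 hu huy hune hu1).symm
      have hchi_ne_xb1 : ∀ y ∈ Ycom, χ y ≠ xb1 := by
        intro y hy heq
        obtain ⟨hlev, hadjy, hnadj1, hne1⟩ := hprops y hy
        rw [hYcom, common2, Finset.mem_filter] at hy
        obtain ⟨_, hy2, h1y, huy⟩ := hy
        rw [heq] at hadjy
        exact hex y hy2 huy h1y hadjy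
      have hinj : Set.InjOn χ Ycom := by
        intro y hy y' hy' heq
        simp only [Finset.coe_mem, Finset.mem_coe] at hy hy'
        obtain ⟨hlev, hadjy, hnadj1, hne1⟩ := hprops y hy
        obtain ⟨hlev', hadjy', hnadj1', hne1'⟩ := hprops y' hy'
        have hcc2 := common2_card hconn hD hL2 hreg hBM hp hx1 hlev hnadj1 hne1
        rw [hYcom, common2, Finset.mem_filter] at hy hy'
        have hm1 : y ∈ common2 G x0 x1 (χ y) := by
          rw [common2, Finset.mem_filter]
          exact ⟨Finset.mem_univ y, hy.2.1, hy.2.2.1, hadjy⟩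
        have hm2 : y' ∈ common2 G x0 x1 (χ y) := by
          rw [common2, Finset.mem_filter]
          refine ⟨Finset.mem_univ y', hy'.2.1, hy'.2.2.1, ?_⟩
          rw [heq]
          exact hadjy'
        exact Finset.card_le_one.mp (le_of_eq hcc2) _ hm1 _ hm2
      set Aset : Finset V :=
        univ.filter (fun v => G.dist x0 v = 1 ∧ G.Adj u v ∧ G.Adj x1 v) with hAset
      have htri := tri_ge hconn hD (show 0 < L by omega) hreg hBM hux1
      have hdp := dplus_eq hconn hD (show 0 < L by omega) hreg hBM hp hu
      have hcsplit := nk_card_split hconn hreg hu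
      -- decomposition of the triangle set
      set Tset : Finset V := univ.filter (fun v => G.Adj u v ∧ G.Adj x1 v) with hTset
      have hTle2 : ∀ v ∈ Tset, G.dist x0 v ≤ 2 := by
        intro v hv
        rw [hTset, Finset.mem_filter] at hv
        exact nbr_dist_le2 hconn hu v ((SimpleGraph.mem_neighborFinset G u v).mpr hv.2.1)
      have hTsplit := split3_card (f := fun v => G.dist x0 v) hTle2
      have hT0 : Tset.filter (fun v => G.dist x0 v = 0) = {x0} := by
        ext v
        rw [Finset.mem_filter, hTset, Finset.mem_filter, Finset.mem_singleton]
        constructor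
        · rintro ⟨_, h0⟩
          exact eq_x0_of_level0 hconn h0
        · intro hveq
          rw [hveq]
          exact ⟨⟨Finset.mem_univ x0, (SimpleGraph.dist_eq_one_iff_adj.mp hu).symm,
            (SimpleGraph.dist_eq_one_iff_adj.mp hx1).symm⟩, SimpleGraph.dist_self⟩
      have hT1eq : Tset.filter (fun v => G.dist x0 v = 1) = Aset := by
        ext v
        rw [Finset.mem_filter, hTset, Finset.mem_filter, hAset, Finset.mem_filter]
        constructor
        · rintro ⟨⟨_, h1, h2⟩, h3⟩
          exact ⟨Finset.mem_univ v, h3, h1, h2⟩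
        · rintro ⟨_, h3, h1, h2⟩
          exact ⟨⟨Finset.mem_univ v, h1, h2⟩, h3⟩
      have hT2eq : Tset.filter (fun v => G.dist x0 v = 2) = Ycom := by
        ext y
        rw [Finset.mem_filter, hTset, Finset.mem_filter, hYcom, common2, Finset.mem_filter]
        constructor
        · rintro ⟨⟨_, huy, h1y⟩, h2⟩
          exact ⟨Finset.mem_univ y, h2, h1y, huy⟩
        · rintro ⟨_, h2, h1y, huy⟩
          exact ⟨⟨Finset.mem_univ y, huy, h1y⟩, h2⟩
      have hTeq : Tset.card = 1 + Aset.card + Ycom.card := by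
        rw [hTsplit, hT0, hT1eq, hT2eq, Finset.card_singleton]
      -- upper bound
      have hTcard_ge : (nk G x0 u 1).card ≤ Tset.card := by
        have h1 : (D:ℝ) - 1 - (Tset.card : ℝ) ≤ ((nk G x0 u 2).card : ℝ) := by
          rw [hdp, hTset]
          exact htri
        have h2 : ((nk G x0 u 1).card : ℝ) + ((nk G x0 u 2).card : ℝ) + 1 = (D:ℝ) := by
          have h' : (1 + (nk G x0 u 1).card + (nk G x0 u 2).card : ℕ) = D := hcsplit
          push_cast [← h']
          ring
        have h3 : ((nk G x0 u 1).card : ℝ) ≤ (Tset.card : ℝ) := by linarith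
        exact_mod_cast h3
      -- lower bound
      set Sbig : Finset V := insert x1 (insert xb1 (Aset ∪ Ycom.image χ)) with hSbig
      have hsub : Sbig ⊆ nk G x0 u 1 := by
        intro v hv
        rw [hSbig, Finset.mem_insert, Finset.mem_insert, Finset.mem_union] at hv
        rw [mem_nk]
        rcases hv with heq | heq | hv | hv
        · rw [heq]
          exact ⟨hux1, hx1⟩
        · rw [heq]
          exact ⟨huxb1, hxb1⟩
        · rw [hAset, Finset.mem_filter] at hv
          exact ⟨hv.2.2.1, hv.2.1⟩
        · obtain ⟨y, hy, heq⟩ := Finset.mem_image.mp hv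
          obtain ⟨hlev, _, _, _⟩ := hprops y hy
          rw [← heq]
          exact ⟨hadj_u_chi y hy, hlev⟩
      have hdisj1 : Disjoint Aset (Ycom.image χ) := by
        rw [Finset.disjoint_left]
        intro v hv hv2
        rw [hAset, Finset.mem_filter] at hv
        obtain ⟨y, hy, heq⟩ := Finset.mem_image.mp hv2
        obtain ⟨_, _, hnadj1, _⟩ := hprops y hy
        rw [heq] at hnadj1
        exact hnadj1 hv.2.2.2
      have hxb1notin : xb1 ∉ Aset ∪ Ycom.image χ := by
        rw [Finset.mem_union]
        rintro (hv | hv)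
        · rw [hAset, Finset.mem_filter] at hv
          exact hnadj hv.2.2.2
        · obtain ⟨y, hy, heq⟩ := Finset.mem_image.mp hv
          exact hchi_ne_xb1 y hy heq
      have hx1notin : x1 ∉ insert xb1 (Aset ∪ Ycom.image χ) := by
        rw [Finset.mem_insert, Finset.mem_union]
        rintro (heq | hv | hv)
        · exact hne heq
        · rw [hAset, Finset.mem_filter] at hv
          exact G.irrefl hv.2.2.2
        · obtain ⟨y, hy, heq⟩ := Finset.mem_image.mp hv
          obtain ⟨_, _, _, hne1⟩ := hprops y hy
          exact hne1 heq
      have hScard : Sbig.card = 2 + Aset.card + Ycom.card := by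
        rw [hSbig, Finset.card_insert_of_notMem hx1notin,
          Finset.card_insert_of_notMem hxb1notin,
          Finset.card_union_of_disjoint hdisj1, Finset.card_image_of_injOn hinj]
        omega
      have hlow2 : 2 + Aset.card + Ycom.card ≤ (nk G x0 u 1).card := by
        rw [← hScard]
        exact Finset.card_le_card hsub
      omega


end BMS
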